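/- Let U be a bipartite complex permutation matrix of Schmidt rank two on ℂ^{d_A} ⊗ ℂ^{d_B} that is block diagonal (each big row and big column has exactly one nonzero block, on the diagonal), with the first diagonal block equal to I_{d_B} and second diagonal block D₂ linearly independent of I_{d_B}. If some diagonal block of U is not proportional to I_{d_B} or D₂, then D₂ is diagonal with exactly two distinct diagonal entries. -/
import Mathlib


/-- A complex permutation matrix: a unitary matrix with exactly one nonzero
entry in each row and each column. -/
def IsComplexPermMatrix {ι : Type} [Fintype ι] [DecidableEq ι]
    (M : Matrix ι ι ℂ) : Prop :=
  M ∈ Matrix.unitaryGroup ι ℂ ∧ (∀ i, ∃! j, M i j ≠ 0) ∧ (∀ j, ∃! i, M i j ≠ 0)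

/-- The `(j, k)` block (of size `dB × dB`) of a bipartite matrix on `ℂ^{dA} ⊗ ℂ^{dB}`. -/
def blk {dA dB : ℕ} (U : Matrix (Fin dA × Fin dB) (Fin dA × Fin dB) ℂ)
    (j k : Fin dA) : Matrix (Fin dB) (Fin dB) ℂ :=
  fun b b' => U (j, b) (k, b')

/-- The Schmidt rank of a bipartite matrix: the dimension of the span of its blocks. -/
noncomputable def schmidtRank {dA dB : ℕ}
    (U : Matrix (Fin dA × Fin dB) (Fin dA × Fin dB) ℂ) : ℕ :=
  Module.finrank ℂ ↥(Submodule.span ℂ {M | ∃ j k, M = blk U j k})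

/-- A quadratic with nonzero leading coefficient cannot have three distinct roots. -/
private lemma quad_aux {A B C z1 z2 z3 : ℂ} (hA : A ≠ 0)
    (h1 : A * z1 ^ 2 + B * z1 + C = 0) (h2 : A * z2 ^ 2 + B * z2 + C = 0)
    (h3 : A * z3 ^ 2 + B * z3 + C = 0) (h12 : z1 ≠ z2) (h13 : z1 ≠ z3) :
    z2 = z3 := by
  have e2 : A * (z1 + z2) + B = 0 := by
    have hd := sub_ne_zero.mpr h12
    have hfac : (z1 - z2) * (A * (z1 + z2) + B) = 0 := by linear_combination h1 - h2
    rcases mul_eq_zero.mp hfac with h' | h'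
    · exact absurd h' hd
    · exact h'
  have e3 : A * (z1 + z3) + B = 0 := by
    have hd := sub_ne_zero.mpr h13
    have hfac : (z1 - z3) * (A * (z1 + z3) + B) = 0 := by linear_combination h1 - h3
    rcases mul_eq_zero.mp hfac with h' | h'
    · exact absurd h' hd
    · exact h'
  have : A * (z2 - z3) = 0 := by linear_combination e2 - e3
  rcases mul_eq_zero.mp this with h' | h'
  · exact absurd h' hA
  · exact sub_eq_zero.mp h'

theorem stmt14 {dA dB : ℕ} (hdA : 2 ≤ dA)
    (U : Matrix (Fin dA × Fin dB) (Fin dA × Fin dB) ℂ)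
    (hU : IsComplexPermMatrix U)
    (hsr : schmidtRank U = 2)
    (hbd : ∀ j k : Fin dA, j ≠ k → blk U j k = 0)
    (h0 : blk U ⟨0, by omega⟩ ⟨0, by omega⟩ = 1)
    (D2 : Matrix (Fin dB) (Fin dB) ℂ)
    (hD2 : D2 = blk U ⟨1, by omega⟩ ⟨1, by omega⟩)
    (hli : LinearIndependent ℂ ![(1 : Matrix (Fin dB) (Fin dB) ℂ), D2])
    (hexc : ∃ j : Fin dA, (¬∃ c : ℂ, blk U j j = c • (1 : Matrix (Fin dB) (Fin dB) ℂ)) ∧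
      (¬∃ c : ℂ, blk U j j = c • D2)) :
    D2.IsDiag ∧ {z : ℂ | ∃ b, D2 b b = z}.ncard = 2 := by
  classical
  have hz0 : (0 : ℕ) < dA := by omega
  have ho1 : (1 : ℕ) < dA := by omega
  set i0 : Fin dA := ⟨0, by omega⟩ with hi0
  set i1 : Fin dA := ⟨1, by omega⟩ with hi1
  -- dB is positive
  have h1ne : (1 : Matrix (Fin dB) (Fin dB) ℂ) ≠ 0 := by
    have := hli.ne_zero 0
    simpa using this
  have hdB : 0 < dB := by
    by_contra h
    have hdB0 : dB = 0 := by omega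
    subst hdB0
    exact h1ne (Subsingleton.elim _ _)
  -- unitarity row sums
  have hunit : U * star U = 1 := Matrix.mem_unitaryGroup_iff.mp hU.1
  have hsum : ∀ i : Fin dA × Fin dB, ∑ p, U i p * star (U i p) = 1 := by
    intro i
    have := congrFun (congrFun hunit i) i
    simpa [Matrix.mul_apply, Matrix.one_apply, Matrix.star_apply] using this
  -- each diagonal block has a unique nonzero entry in each row
  have hrow : ∀ (k : Fin dA) (b : Fin dB), ∃! b', blk U k k b b' ≠ 0 := by
    intro k b
    obtain ⟨⟨k', b'⟩, hne, huniq⟩ := hU.2.1 (k, b)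
    have hk : k' = k := by
      by_contra h
      have hz : U (k, b) (k', b') = 0 := by
        have := congrFun (congrFun (hbd k k' (Ne.symm h)) b) b'
        simpa [blk] using this
      exact hne hz
    subst hk
    refine ⟨b', hne, ?_⟩
    intro b'' hb''
    have := huniq (k', b'') hb''
    exact (Prod.ext_iff.mp this).2
  -- every diagonal block lies in the span of 1 and D2
  set S : Set (Matrix (Fin dB) (Fin dB) ℂ) := {M | ∃ j k, M = blk U j k} with hS
  have h1S : (1 : Matrix (Fin dB) (Fin dB) ℂ) ∈ S := ⟨i0, i0, h0.symm⟩
  have hD2S : D2 ∈ S := ⟨i1, i1, hD2⟩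
  have hle : Submodule.span ℂ {(1 : Matrix (Fin dB) (Fin dB) ℂ), D2} ≤ Submodule.span ℂ S := by
    apply Submodule.span_mono
    intro x hx
    rcases hx with rfl | hx
    · exact h1S
    · rw [Set.mem_singleton_iff] at hx
      subst hx
      exact hD2S
  have hrange : Set.range ![(1 : Matrix (Fin dB) (Fin dB) ℂ), D2] =
      {(1 : Matrix (Fin dB) (Fin dB) ℂ), D2} := by
    ext x
    simp [Matrix.range_cons, Matrix.range_empty, or_comm]
  have hcard : Module.finrank ℂ ↥(Submodule.span ℂ {(1 : Matrix (Fin dB) (Fin dB) ℂ), D2}) = 2 := by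
    have h := finrank_span_eq_card hli
    rw [hrange] at h
    simpa using h
  have hsr' : Module.finrank ℂ ↥(Submodule.span ℂ S) = 2 := hsr
  have hspaneq : Submodule.span ℂ S = Submodule.span ℂ {(1 : Matrix (Fin dB) (Fin dB) ℂ), D2} := by
    refine (Submodule.eq_of_le_of_finrank_le hle ?_).symm
    rw [hcard, hsr']
  have hmem : ∀ k : Fin dA, ∃ α β : ℂ, blk U k k = α • 1 + β • D2 := by
    intro k
    have hmem' : blk U k k ∈ Submodule.span ℂ S := Submodule.subset_span ⟨k, k, rfl⟩
    rw [hspaneq, Submodule.mem_span_pair] at hmem'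
    obtain ⟨a, b, hab⟩ := hmem'
    exact ⟨a, b, hab.symm⟩
  -- the exceptional block
  obtain ⟨j, hj1, hj2⟩ := hexc
  obtain ⟨α, β, hM⟩ := hmem j
  have hα : α ≠ 0 := by
    rintro rfl
    exact hj2 ⟨β, by simpa using hM⟩
  have hβ : β ≠ 0 := by
    rintro rfl
    exact hj1 ⟨α, by simpa using hM⟩
  -- D2 is diagonal
  have hdiagD : D2.IsDiag := by
    intro a b hab
    by_contra hD
    -- the unique nonzero entry of row a of D2 is at column b
    obtain ⟨c, hc, hcu⟩ := hrow i1 a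
    have hDentry : ∀ x, blk U i1 i1 a x = D2 a x := by
      intro x; rw [hD2]
    have hcb : b = c := hcu b (show blk U i1 i1 a b ≠ 0 by rw [hDentry]; exact hD)
    have hDaa : D2 a a = 0 := by
      by_contra h'
      have : a = c := hcu a (show blk U i1 i1 a a ≠ 0 by rw [hDentry]; exact h')
      exact hab (this.trans hcb.symm)
    -- now row a of blk U j j has two nonzero entries
    obtain ⟨c', _, hcu'⟩ := hrow j a
    have hMab : blk U j j a b ≠ 0 := by
      rw [hM]
      simp only [Matrix.add_apply, Matrix.smul_apply, Matrix.one_apply, smul_eq_mul,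
        if_neg hab]
      simpa using mul_ne_zero hβ hD
    have hMaa : blk U j j a a ≠ 0 := by
      rw [hM]
      simp only [Matrix.add_apply, Matrix.smul_apply, Matrix.one_apply, smul_eq_mul,
        if_pos rfl, hDaa]
      simpa using hα
    have h1' : a = c' := hcu' a hMaa
    have h2' : b = c' := hcu' b hMab
    exact hab (h1'.trans h2'.symm)
  -- diagonal entries of D2 are nonzero
  have hdne : ∀ b, D2 b b ≠ 0 := by
    intro b
    obtain ⟨c, hc, _⟩ := hrow i1 b
    have hc' : D2 b c ≠ 0 := by rw [hD2]; exact hc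
    rcases eq_or_ne b c with rfl | hbc
    · exact hc'
    · exact absurd (hdiagD hbc) hc'
  -- modulus-one facts from unitarity for rows whose block-row is "diagonal"
  have hmod : ∀ (k : Fin dA) (b : Fin dB),
      (∀ b', b' ≠ b → blk U k k b b' = 0) →
      blk U k k b b * star (blk U k k b b) = 1 := by
    intro k b hz
    have h := hsum (k, b)
    rw [Finset.sum_eq_single ((k, b) : Fin dA × Fin dB)] at h
    · exact h
    · rintro ⟨k', b'⟩ - hne
      rcases eq_or_ne k' k with rfl | hk
      · have hb' : b' ≠ b := by
          rintro rfl; exact hne rfl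
        have h0' : U (k', b) (k', b') = 0 := hz b' hb'
        simp [h0']
      · have hzb : blk U k k' = 0 := hbd k k' (Ne.symm hk)
        have h0' : U (k, b) (k', b') = 0 := by
          have := congrFun (congrFun hzb b) b'
          simpa [blk] using this
        simp [h0']
    · intro h'
      exact absurd (Finset.mem_univ _) h'
  -- entry formula for the exceptional block on the diagonal
  have hMentry : ∀ b, blk U j j b b = α + β * D2 b b := by
    intro b
    rw [hM]
    simp [Matrix.add_apply, Matrix.smul_apply, Matrix.one_apply]
  -- the key quadratic equation satisfied by every diagonal entry of D2
  have key : ∀ b : Fin dB,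
      star α * β * (D2 b b) ^ 2 + (α * star α + β * star β - 1) * (D2 b b)
        + α * star β = 0 := by
    intro b
    set z := D2 b b with hzdef
    have hz1 : z * star z = 1 := by
      have h := hmod i1 b (fun b' hb' => by
        rw [← hD2]; exact hdiagD (Ne.symm hb'))
      rw [← hD2] at h
      exact h
    have hz2 : (α + β * z) * star (α + β * z) = 1 := by
      have h := hmod j b (fun b' hb' => by
        rw [hM]
        simp only [Matrix.add_apply, Matrix.smul_apply, Matrix.one_apply, smul_eq_mul]
        rw [if_neg (fun h => hb' h.symm), hdiagD (Ne.symm hb')]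
        ring)
      rw [hMentry b] at h
      exact h
    have hz2' : (α + β * z) * (star α + star β * star z) = 1 := by
      rw [← hz2]
      rw [star_add, star_mul']
    linear_combination z * hz2' - (α * star β + β * star β * z) * hz1
  -- at least two distinct diagonal values
  set b0 : Fin dB := ⟨0, hdB⟩ with hb0def
  have h2v : ∃ b1, D2 b1 b1 ≠ D2 b0 b0 := by
    by_contra h
    push_neg at h
    have hDc : D2 = (D2 b0 b0) • (1 : Matrix (Fin dB) (Fin dB) ℂ) := by
      ext x y
      rcases eq_or_ne x y with rfl | hxy
      · simp [h x, Matrix.one_apply]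
      · simp [hdiagD hxy, Matrix.one_apply, hxy]
    rw [LinearIndependent.pair_iff] at hli
    have := hli (D2 b0 b0) (-1) (by
      ext x y
      rcases eq_or_ne x y with rfl | hxy
      · simp [Matrix.one_apply, h x]
      · simp [Matrix.one_apply, hxy, hdiagD hxy])
    norm_num at this
  obtain ⟨b1, hb1⟩ := h2v
  have hA : star α * β ≠ 0 := mul_ne_zero (star_ne_zero.mpr hα) hβ
  -- the set of diagonal values has exactly two elements
  have hset : {z : ℂ | ∃ b, D2 b b = z} = {D2 b1 b1, D2 b0 b0} := by
    ext w
    constructor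
    · rintro ⟨b, rfl⟩
      by_contra h
      simp only [Set.mem_insert_iff, Set.mem_singleton_iff] at h
      push_neg at h
      obtain ⟨h1', h2'⟩ := h
      have := quad_aux hA (key b) (key b1) (key b0) h1' h2'
      exact hb1 this
    · rintro (rfl | rfl)
      · exact ⟨b1, rfl⟩
      · exact ⟨b0, rfl⟩
  refine ⟨hdiagD, ?_⟩
  rw [hset]
  exact Set.ncard_pair hb1
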